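/- Let 𝔤 be the 6-dimensional real Lie algebra with basis (E, c₃, c₁, c₂, F, G) and brackets [E,c₁] = −c₂, [E,c₂] = c₁, [E,F] = −G, [E,G] = F, [c₃,F] = −c₁, [c₃,G] = −c₂, [c₁,F] = c₃, [c₂,G] = c₃, all other brackets of basis elements (up to antisymmetry) being zero (this is 𝔰𝔬(3)⋉ℝ³). Let p = span(c₃,c₁,c₂,F,G), let π : 𝔤 → p be the projection along span(E), let ⟨·,·⟩ be the inner product on p whose matrix in the basis (c₃,c₁,c₂,F,G) is g(α,β,γ,μ,ν) with βγ > τ := μ²+ν², let B be the Killing form of 𝔤, and for any ⟨·,·⟩-orthonormal basis (X_i) of p define Ric(X,Y) = −(1/2)B(X,Y) − (1/2)∑_i ⟨π[X,X_i], π[Y,X_i]⟩ + (1/4)∑_{i,j} ⟨π[X_i,X_j], X⟩·⟨π[X_i,X_j], Y⟩. Then: Ric(c₃,c₃) = (α²−β²)/(βγ−τ) + 2α²ν²/(βγ−τ)²; Ric(c₁,c₁) = Ric(c₂,c₂) = (β/(2α))·(β²−α²)/(βγ−τ); Ric(F,F) = Ric(G,G) = 2 − β/α + (γ/(2α))·(β²−α²)/(βγ−τ);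 Ric(c₁,F) = Ric(c₂,G) = μ(β²−α²)/(2α(βγ−τ)); and Ric(c₁,G) = −Ric(c₂,F) = ν(α²+β²)/(2α(βγ−τ)). -/

import Mathlib

set_option maxHeartbeats 2000000

lemma fs0' : Fin.succ (0:Fin 5) = 1 := rfl
lemma fs1' : Fin.succ (1:Fin 5) = 2 := rfl
lemma fs2' : Fin.succ (2:Fin 5) = 3 := rfl
lemma fs3' : Fin.succ (3:Fin 5) = 4 := rfl
lemma fs4' : Fin.succ (4:Fin 5) = 5 := rfl

/-- The matrix of the `Ad`-invariant inner product with parameters `α β γ μ ν` in the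
ordered basis `(c₃, c₁, c₂, F, G)` (resp. `(A, B, C, D, E)`). -/
def metricMatrix (α β γ μ ν : ℝ) : Matrix (Fin 5) (Fin 5) ℝ :=
  !![α, 0, 0, 0, 0;
     0, β, 0, μ, ν;
     0, 0, β, -ν, μ;
     0, μ, -ν, γ, 0;
     0, ν, μ, 0, γ]

/-- Besse's formula for the Ricci tensor of a homogeneous metric, applied to
`SO(3) ⋉ ℝ³ / SO(2)`.  Here `L = 𝔰𝔬(3) ⋉ ℝ³` with basis
`b 0 = E, b 1 = c₃, b 2 = c₁, b 3 = c₂, b 4 = F, b 5 = G` and the indicated bracket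
table, `p = span(c₃,c₁,c₂,F,G)`, `π` is the projection onto `p` along `span(E)`,
`ip` is the inner product on `p` with matrix `g(α,β,γ,μ,ν)` (with `βγ > τ := μ²+ν²`)
in the basis `(c₃,c₁,c₂,F,G)`, `(X i)` is any `ip`-orthonormal basis of `p`, and
`Ric(Y,Z) = −(1/2)B(Y,Z) − (1/2)∑ᵢ ⟨π[Y,Xᵢ], π[Z,Xᵢ]⟩
  + (1/4)∑ᵢⱼ ⟨π[Xᵢ,Xⱼ],Y⟩·⟨π[Xᵢ,Xⱼ],Z⟩` with `B` the Killing form of `L`.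
The conclusion lists the entries of the Ricci tensor. -/
theorem ricci_tensor_so3_semidirect_R3
    (L : Type) [LieRing L] [LieAlgebra ℝ L] [Module.Finite ℝ L]
    (b : Module.Basis (Fin 6) ℝ L)
    (hbr : ∀ i j : Fin 6, ⁅b i, b j⁆ =
      ![![(0 : L), 0, -b 3, b 2, -b 5, b 4],
        ![0, 0, 0, 0, -b 2, -b 3],
        ![b 3, 0, 0, 0, b 1, 0],
        ![-b 2, 0, 0, 0, 0, b 1],
        ![b 5, b 2, -b 1, 0, 0, -b 0],
        ![-b 4, b 3, 0, -b 1, b 0, 0]] i j)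
    (α β γ μ ν τ : ℝ) (hα : 0 < α) (hβ : 0 < β) (hγ : 0 < γ)
    (hτ : τ = μ ^ 2 + ν ^ 2) (hpd : τ < β * γ)
    (ip : L → L → ℝ)
    (hip : ip = fun u w => dotProduct (fun i : Fin 5 => b.repr u i.succ)
      ((metricMatrix α β γ μ ν).mulVec (fun i : Fin 5 => b.repr w i.succ)))
    (π : L → L)
    (hπ : ∀ z : L, π z = z - b.repr z 0 • b 0)
    (X : Fin 5 → L)
    (hX0 : ∀ i, b.repr (X i) 0 = 0)
    (hXspan : Submodule.span ℝ (Set.range X) =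
      Submodule.span ℝ (Set.range fun i : Fin 5 => b i.succ))
    (hXon : ∀ i j, ip (X i) (X j) = if i = j then 1 else 0)
    (Ric : L → L → ℝ)
    (hRic : Ric = fun Y Z =>
      -(1 / 2) * killingForm ℝ L Y Z
        - (1 / 2) * ∑ i : Fin 5, ip (π ⁅Y, X i⁆) (π ⁅Z, X i⁆)
        + (1 / 4) * ∑ i : Fin 5, ∑ j : Fin 5,
            ip (π ⁅X i, X j⁆) Y * ip (π ⁅X i, X j⁆) Z) :
    Ric (b 1) (b 1) =
        (α ^ 2 - β ^ 2) / (β * γ - τ) + 2 * α ^ 2 * ν ^ 2 / (β * γ - τ) ^ 2 ∧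
    Ric (b 2) (b 2) = β / (2 * α) * ((β ^ 2 - α ^ 2) / (β * γ - τ)) ∧
    Ric (b 3) (b 3) = β / (2 * α) * ((β ^ 2 - α ^ 2) / (β * γ - τ)) ∧
    Ric (b 4) (b 4) = 2 - β / α + γ / (2 * α) * ((β ^ 2 - α ^ 2) / (β * γ - τ)) ∧
    Ric (b 5) (b 5) = 2 - β / α + γ / (2 * α) * ((β ^ 2 - α ^ 2) / (β * γ - τ)) ∧
    Ric (b 2) (b 4) = μ * (β ^ 2 - α ^ 2) / (2 * α * (β * γ - τ)) ∧
    Ric (b 3) (b 5) = μ * (β ^ 2 - α ^ 2) / (2 * α * (β * γ - τ)) ∧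
    Ric (b 2) (b 5) = ν * (α ^ 2 + β ^ 2) / (2 * α * (β * γ - τ)) ∧
    Ric (b 3) (b 4) = -(ν * (α ^ 2 + β ^ 2) / (2 * α * (β * γ - τ))) := by
  subst hτ
  have hα0 : α ≠ 0 := ne_of_gt hα
  have hd : β * γ - (μ ^ 2 + ν ^ 2) ≠ 0 := sub_ne_zero.mpr (ne_of_gt hpd)
  -- bracket table
  have t00 : ⁅b 0, b 0⁆ = 0 := hbr 0 0
  have t01 : ⁅b 0, b 1⁆ = 0 := hbr 0 1
  have t02 : ⁅b 0, b 2⁆ = -b 3 := hbr 0 2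
  have t03 : ⁅b 0, b 3⁆ = b 2 := hbr 0 3
  have t04 : ⁅b 0, b 4⁆ = -b 5 := hbr 0 4
  have t05 : ⁅b 0, b 5⁆ = b 4 := hbr 0 5
  have t10 : ⁅b 1, b 0⁆ = 0 := hbr 1 0
  have t11 : ⁅b 1, b 1⁆ = 0 := hbr 1 1
  have t12 : ⁅b 1, b 2⁆ = 0 := hbr 1 2
  have t13 : ⁅b 1, b 3⁆ = 0 := hbr 1 3
  have t14 : ⁅b 1, b 4⁆ = -b 2 := hbr 1 4
  have t15 : ⁅b 1, b 5⁆ = -b 3 := hbr 1 5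
  have t20 : ⁅b 2, b 0⁆ = b 3 := hbr 2 0
  have t21 : ⁅b 2, b 1⁆ = 0 := hbr 2 1
  have t22 : ⁅b 2, b 2⁆ = 0 := hbr 2 2
  have t23 : ⁅b 2, b 3⁆ = 0 := hbr 2 3
  have t24 : ⁅b 2, b 4⁆ = b 1 := hbr 2 4
  have t25 : ⁅b 2, b 5⁆ = 0 := hbr 2 5
  have t30 : ⁅b 3, b 0⁆ = -b 2 := hbr 3 0
  have t31 : ⁅b 3, b 1⁆ = 0 := hbr 3 1
  have t32 : ⁅b 3, b 2⁆ = 0 := hbr 3 2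
  have t33 : ⁅b 3, b 3⁆ = 0 := hbr 3 3
  have t34 : ⁅b 3, b 4⁆ = 0 := hbr 3 4
  have t35 : ⁅b 3, b 5⁆ = b 1 := hbr 3 5
  have t40 : ⁅b 4, b 0⁆ = b 5 := hbr 4 0
  have t41 : ⁅b 4, b 1⁆ = b 2 := hbr 4 1
  have t42 : ⁅b 4, b 2⁆ = -b 1 := hbr 4 2
  have t43 : ⁅b 4, b 3⁆ = 0 := hbr 4 3
  have t44 : ⁅b 4, b 4⁆ = 0 := hbr 4 4
  have t45 : ⁅b 4, b 5⁆ = -b 0 := hbr 4 5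
  have t50 : ⁅b 5, b 0⁆ = -b 4 := hbr 5 0
  have t51 : ⁅b 5, b 1⁆ = b 3 := hbr 5 1
  have t52 : ⁅b 5, b 2⁆ = 0 := hbr 5 2
  have t53 : ⁅b 5, b 3⁆ = -b 1 := hbr 5 3
  have t54 : ⁅b 5, b 4⁆ = b 0 := hbr 5 4
  have t55 : ⁅b 5, b 5⁆ = 0 := hbr 5 5
  -- inverse metric
  set Qg : Matrix (Fin 5) (Fin 5) ℝ :=
    !![1/α, 0, 0, 0, 0;
       0, γ/(β*γ-(μ^2+ν^2)), 0, -μ/(β*γ-(μ^2+ν^2)), -ν/(β*γ-(μ^2+ν^2));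
       0, 0, γ/(β*γ-(μ^2+ν^2)), ν/(β*γ-(μ^2+ν^2)), -μ/(β*γ-(μ^2+ν^2));
       0, -μ/(β*γ-(μ^2+ν^2)), ν/(β*γ-(μ^2+ν^2)), β/(β*γ-(μ^2+ν^2)), 0;
       0, -ν/(β*γ-(μ^2+ν^2)), -μ/(β*γ-(μ^2+ν^2)), 0, β/(β*γ-(μ^2+ν^2))] with hQgdef
  have hGinv : metricMatrix α β γ μ ν * Qg = 1 := by
    ext i j
    fin_cases i <;> fin_cases j <;>
      (try simp [hQgdef, metricMatrix, Matrix.mul_apply, Fin.sum_univ_five, Matrix.one_apply, Matrix.vecHead, Matrix.vecTail]) <;>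
      (try field_simp) <;> (try ring)
  set P : Fin 5 → Fin 5 → ℝ := fun k i => b.repr (X i) (Fin.succ k) with hPdef
  set Pm : Matrix (Fin 5) (Fin 5) ℝ := Matrix.of P with hPmdef
  have hon : (Pm.transpose * metricMatrix α β γ μ ν) * Pm = 1 := by
    ext i j
    have h := hXon i j
    rw [hip] at h
    have h2 : ((Pm.transpose * metricMatrix α β γ μ ν) * Pm) i j
        = ∑ k : Fin 5, P k i * ∑ l : Fin 5, metricMatrix α β γ μ ν k l * P l j := by
      simp only [Matrix.mul_apply, Matrix.transpose_apply, Matrix.of_apply, hPmdef,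
        Finset.sum_mul, Finset.mul_sum]
      rw [Finset.sum_comm]
      exact Finset.sum_congr rfl fun k _ => Finset.sum_congr rfl fun l _ => by ring
    rw [h2, Matrix.one_apply]
    exact h
  have hQmat : Pm * Pm.transpose = Qg := by
    have h3 : Pm * (Pm.transpose * metricMatrix α β γ μ ν) = 1 := mul_eq_one_comm.mp hon
    have h4 : (Pm * Pm.transpose) * metricMatrix α β γ μ ν = 1 := by
      rw [Matrix.mul_assoc]; exact h3
    calc Pm * Pm.transpose = (Pm * Pm.transpose) * (metricMatrix α β γ μ ν * Qg) := by
          rw [hGinv, Matrix.mul_one]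
      _ = ((Pm * Pm.transpose) * metricMatrix α β γ μ ν) * Qg := by
          simp only [Matrix.mul_assoc]
      _ = Qg := by rw [h4, Matrix.one_mul]
  have hQ : ∀ a c : Fin 5, (∑ i : Fin 5, P a i * P c i) = Qg a c := by
    intro a c
    have h := congrFun (congrFun hQmat a) c
    have h2 : (Pm * Pm.transpose) a c = ∑ i : Fin 5, P a i * P c i := by
      simp only [hPmdef, Matrix.mul_apply, Matrix.transpose_apply, Matrix.of_apply]
    rw [← h2]
    exact h
  have hXrepr : ∀ i, X i = ∑ k : Fin 5, P k i • b (Fin.succ k) := by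
    intro i
    have h := b.sum_repr (X i)
    rw [Fin.sum_univ_succ, hX0 i, zero_smul, zero_add] at h
    exact h.symm
  have hπr : ∀ (z : L) (k : Fin 5), b.repr (π z) (Fin.succ k) = b.repr z (Fin.succ k) := by
    intro z k
    have h0 : (0 : Fin 6) ≠ Fin.succ k := (Fin.succ_ne_zero k).symm
    rw [hπ]
    simp [Finsupp.single_apply, h0]
  have key : ∀ u w : L, ip u w =
      ∑ k : Fin 5, ∑ l : Fin 5,
        b.repr u (Fin.succ k) * (metricMatrix α β γ μ ν k l * b.repr w (Fin.succ l)) := by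
    intro u w
    rw [hip]
    simp [dotProduct, Matrix.mulVec, Finset.mul_sum]
  have keyππ : ∀ u w : L, ip (π u) (π w) = ∑ k : Fin 5, ∑ l : Fin 5,
      b.repr u (Fin.succ k) * (metricMatrix α β γ μ ν k l * b.repr w (Fin.succ l)) := by
    intro u w
    rw [key]
    simp only [hπr]
  have keyπ : ∀ (u : L) (m : Fin 5), ip (π u) (b (Fin.succ m)) = ∑ k : Fin 5,
      b.repr u (Fin.succ k) * metricMatrix α β γ μ ν k m := by
    intro u m
    rw [key]
    refine Finset.sum_congr rfl fun k _ => ?_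
    rw [Finset.sum_eq_single m]
    · simp [hπr]
    · intro l _ hl
      have hne : Fin.succ m ≠ Fin.succ l := fun h => hl ((Fin.succ_injective _ h).symm)
      simp [Finsupp.single_apply, hne]
    · simp
  have hsum : ∀ (x : L) (f : Fin 5 → L), ⁅x, ∑ k : Fin 5, f k⁆ = ∑ k : Fin 5, ⁅x, f k⁆ := by
    intro x f
    exact map_sum (LieAlgebra.ad ℝ L x) f Finset.univ
  have hsuml : ∀ (y : L) (f : Fin 5 → L), ⁅∑ k : Fin 5, f k, y⁆ = ∑ k : Fin 5, ⁅f k, y⁆ := by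
    intro y f
    calc ⁅∑ k : Fin 5, f k, y⁆ = -⁅y, ∑ k : Fin 5, f k⁆ := (lie_skew _ _).symm
      _ = -∑ k : Fin 5, ⁅y, f k⁆ := by rw [hsum]
      _ = ∑ k : Fin 5, -⁅y, f k⁆ := by rw [Finset.sum_neg_distrib]
      _ = ∑ k : Fin 5, ⁅f k, y⁆ := Finset.sum_congr rfl fun k _ => lie_skew _ _
  have hbX1 : ∀ i, ⁅b 1, X i⁆ = (-(P 3 i)) • b 2 + (-(P 4 i)) • b 3 := by
    intro i
    rw [hXrepr i, hsum, Fin.sum_univ_five]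
    simp only [lie_smul, fs0', fs1', fs2', fs3', fs4', t11, t12, t13, t14, t15]
    module
  have hbX2 : ∀ i, ⁅b 2, X i⁆ = P 3 i • b 1 := by
    intro i
    rw [hXrepr i, hsum, Fin.sum_univ_five]
    simp only [lie_smul, fs0', fs1', fs2', fs3', fs4', t21, t22, t23, t24, t25]
    module
  have hbX3 : ∀ i, ⁅b 3, X i⁆ = P 4 i • b 1 := by
    intro i
    rw [hXrepr i, hsum, Fin.sum_univ_five]
    simp only [lie_smul, fs0', fs1', fs2', fs3', fs4', t31, t32, t33, t34, t35]
    module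
  have hbX4 : ∀ i, ⁅b 4, X i⁆ = P 0 i • b 2 + (-(P 1 i)) • b 1 + (-(P 4 i)) • b 0 := by
    intro i
    rw [hXrepr i, hsum, Fin.sum_univ_five]
    simp only [lie_smul, fs0', fs1', fs2', fs3', fs4', t41, t42, t43, t44, t45]
    module
  have hbX5 : ∀ i, ⁅b 5, X i⁆ = P 0 i • b 3 + (-(P 2 i)) • b 1 + P 3 i • b 0 := by
    intro i
    rw [hXrepr i, hsum, Fin.sum_univ_five]
    simp only [lie_smul, fs0', fs1', fs2', fs3', fs4', t51, t52, t53, t54, t55]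
    module
  have hXX : ∀ i j, ⁅X i, X j⁆ =
      (P 1 i * P 3 j - P 3 i * P 1 j + (P 2 i * P 4 j - P 4 i * P 2 j)) • b 1
      + (P 3 i * P 0 j - P 0 i * P 3 j) • b 2
      + (P 4 i * P 0 j - P 0 i * P 4 j) • b 3
      + (P 4 i * P 3 j - P 3 i * P 4 j) • b 0 := by
    intro i j
    rw [hXrepr i, hXrepr j, hsuml, Fin.sum_univ_five]
    simp only [smul_lie, hsum, lie_add, lie_smul, Fin.sum_univ_five, fs0', fs1', fs2', fs3', fs4',
      t11, t12, t13, t14, t15, t21, t22, t23, t24, t25, t31, t32, t33, t34, t35,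
      t41, t42, t43, t44, t45, t51, t52, t53, t54, t55]
    module
  have hS1_11 : ∑ i : Fin 5, ip (π ⁅b 1, X i⁆) (π ⁅b 1, X i⁆) = 2*β^2/(β*γ-(μ^2+ν^2)) := by
    have h : ∀ i : Fin 5, ip (π ⁅b 1, X i⁆) (π ⁅b 1, X i⁆) = β * (P 3 i * P 3 i) + β * (P 4 i * P 4 i) := by
      intro i
      rw [hbX1 i, keyππ]
      simp [Fin.sum_univ_five, fs0', fs1', fs2', fs3', fs4', Finsupp.single_apply, metricMatrix, Matrix.vecHead, Matrix.vecTail]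
      try ring
    rw [Finset.sum_congr rfl fun i _ => h i, Finset.sum_add_distrib, ← Finset.mul_sum,
      ← Finset.mul_sum, hQ 3 3, hQ 4 4]
    simp [hQgdef]
    try field_simp
    try ring
  have hS1_22 : ∑ i : Fin 5, ip (π ⁅b 2, X i⁆) (π ⁅b 2, X i⁆) = α*β/(β*γ-(μ^2+ν^2)) := by
    have h : ∀ i : Fin 5, ip (π ⁅b 2, X i⁆) (π ⁅b 2, X i⁆) = α * (P 3 i * P 3 i) := by
      intro i
      rw [hbX2 i, keyππ]
      simp [Fin.sum_univ_five, fs0', fs1', fs2', fs3', fs4', Finsupp.single_apply, metricMatrix, Matrix.vecHead, Matrix.vecTail]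
      try ring
    rw [Finset.sum_congr rfl fun i _ => h i, ← Finset.mul_sum, hQ 3 3]
    simp [hQgdef]
    try field_simp
    try ring
  have hS1_33 : ∑ i : Fin 5, ip (π ⁅b 3, X i⁆) (π ⁅b 3, X i⁆) = α*β/(β*γ-(μ^2+ν^2)) := by
    have h : ∀ i : Fin 5, ip (π ⁅b 3, X i⁆) (π ⁅b 3, X i⁆) = α * (P 4 i * P 4 i) := by
      intro i
      rw [hbX3 i, keyππ]
      simp [Fin.sum_univ_five, fs0', fs1', fs2', fs3', fs4', Finsupp.single_apply, metricMatrix, Matrix.vecHead, Matrix.vecTail]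
      try ring
    rw [Finset.sum_congr rfl fun i _ => h i, ← Finset.mul_sum, hQ 4 4]
    simp [hQgdef]
    try field_simp
    try ring
  have hS1_44 : ∑ i : Fin 5, ip (π ⁅b 4, X i⁆) (π ⁅b 4, X i⁆) = α*γ/(β*γ-(μ^2+ν^2)) + β/α := by
    have h : ∀ i : Fin 5, ip (π ⁅b 4, X i⁆) (π ⁅b 4, X i⁆) = α * (P 1 i * P 1 i) + β * (P 0 i * P 0 i) := by
      intro i
      rw [hbX4 i, keyππ]
      simp [Fin.sum_univ_five, fs0', fs1', fs2', fs3', fs4', Finsupp.single_apply, metricMatrix, Matrix.vecHead, Matrix.vecTail]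
      try ring
    rw [Finset.sum_congr rfl fun i _ => h i, Finset.sum_add_distrib, ← Finset.mul_sum,
      ← Finset.mul_sum, hQ 1 1, hQ 0 0]
    simp [hQgdef]
    try field_simp
    try ring
  have hS1_55 : ∑ i : Fin 5, ip (π ⁅b 5, X i⁆) (π ⁅b 5, X i⁆) = α*γ/(β*γ-(μ^2+ν^2)) + β/α := by
    have h : ∀ i : Fin 5, ip (π ⁅b 5, X i⁆) (π ⁅b 5, X i⁆) = α * (P 2 i * P 2 i) + β * (P 0 i * P 0 i) := by
      intro i
      rw [hbX5 i, keyππ]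
      simp [Fin.sum_univ_five, fs0', fs1', fs2', fs3', fs4', Finsupp.single_apply, metricMatrix, Matrix.vecHead, Matrix.vecTail]
      try ring
    rw [Finset.sum_congr rfl fun i _ => h i, Finset.sum_add_distrib, ← Finset.mul_sum,
      ← Finset.mul_sum, hQ 2 2, hQ 0 0]
    simp [hQgdef]
    try field_simp
    try ring
  have hS1_24 : ∑ i : Fin 5, ip (π ⁅b 2, X i⁆) (π ⁅b 4, X i⁆) = α*μ/(β*γ-(μ^2+ν^2)) := by
    have h : ∀ i : Fin 5, ip (π ⁅b 2, X i⁆) (π ⁅b 4, X i⁆) = -(α * (P 1 i * P 3 i)) := by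
      intro i
      rw [hbX2 i, hbX4 i, keyππ]
      simp [Fin.sum_univ_five, fs0', fs1', fs2', fs3', fs4', Finsupp.single_apply, metricMatrix, Matrix.vecHead, Matrix.vecTail]
      try ring
    rw [Finset.sum_congr rfl fun i _ => h i, Finset.sum_neg_distrib, ← Finset.mul_sum, hQ 1 3]
    simp [hQgdef]
    try field_simp
    try ring
  have hS1_35 : ∑ i : Fin 5, ip (π ⁅b 3, X i⁆) (π ⁅b 5, X i⁆) = α*μ/(β*γ-(μ^2+ν^2)) := by
    have h : ∀ i : Fin 5, ip (π ⁅b 3, X i⁆) (π ⁅b 5, X i⁆) = -(α * (P 2 i * P 4 i)) := by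
      intro i
      rw [hbX3 i, hbX5 i, keyππ]
      simp [Fin.sum_univ_five, fs0', fs1', fs2', fs3', fs4', Finsupp.single_apply, metricMatrix, Matrix.vecHead, Matrix.vecTail]
      try ring
    rw [Finset.sum_congr rfl fun i _ => h i, Finset.sum_neg_distrib, ← Finset.mul_sum, hQ 2 4]
    simp [hQgdef]
    try field_simp
    try ring
  have hS1_25 : ∑ i : Fin 5, ip (π ⁅b 2, X i⁆) (π ⁅b 5, X i⁆) = -(α*ν/(β*γ-(μ^2+ν^2))) := by
    have h : ∀ i : Fin 5, ip (π ⁅b 2, X i⁆) (π ⁅b 5, X i⁆) = -(α * (P 2 i * P 3 i)) := by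
      intro i
      rw [hbX2 i, hbX5 i, keyππ]
      simp [Fin.sum_univ_five, fs0', fs1', fs2', fs3', fs4', Finsupp.single_apply, metricMatrix, Matrix.vecHead, Matrix.vecTail]
      try ring
    rw [Finset.sum_congr rfl fun i _ => h i, Finset.sum_neg_distrib, ← Finset.mul_sum, hQ 2 3]
    simp [hQgdef]
    try field_simp
    try ring
  have hS1_34 : ∑ i : Fin 5, ip (π ⁅b 3, X i⁆) (π ⁅b 4, X i⁆) = α*ν/(β*γ-(μ^2+ν^2)) := by
    have h : ∀ i : Fin 5, ip (π ⁅b 3, X i⁆) (π ⁅b 4, X i⁆) = -(α * (P 1 i * P 4 i)) := by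
      intro i
      rw [hbX3 i, hbX4 i, keyππ]
      simp [Fin.sum_univ_five, fs0', fs1', fs2', fs3', fs4', Finsupp.single_apply, metricMatrix, Matrix.vecHead, Matrix.vecTail]
      try ring
    rw [Finset.sum_congr rfl fun i _ => h i, Finset.sum_neg_distrib, ← Finset.mul_sum, hQ 1 4]
    simp [hQgdef]
    try field_simp
    try ring
  set M1 : Matrix (Fin 5) (Fin 5) ℝ := !![0,0,0,0,0; 0,0,0,α,0; 0,0,0,0,α; 0,-α,0,0,0; 0,0,-α,0,0] with hM1def
  set M2 : Matrix (Fin 5) (Fin 5) ℝ := !![0,0,0,-β,0; 0,0,0,0,0; 0,0,0,0,0; β,0,0,0,0; 0,0,0,0,0] with hM2def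
  set M3 : Matrix (Fin 5) (Fin 5) ℝ := !![0,0,0,0,-β; 0,0,0,0,0; 0,0,0,0,0; 0,0,0,0,0; β,0,0,0,0] with hM3def
  set M4 : Matrix (Fin 5) (Fin 5) ℝ := !![0,0,0,-μ,ν; 0,0,0,0,0; 0,0,0,0,0; μ,0,0,0,0; -ν,0,0,0,0] with hM4def
  set M5 : Matrix (Fin 5) (Fin 5) ℝ := !![0,0,0,-ν,-μ; 0,0,0,0,0; 0,0,0,0,0; ν,0,0,0,0; μ,0,0,0,0] with hM5def
  have hL1 : ∀ i j : Fin 5, ip (π ⁅X i, X j⁆) (b 1) = (Pm.transpose * M1 * Pm) i j := by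
    intro i j
    have e : ip (π ⁅X i, X j⁆) (b 1) = ∑ k : Fin 5,
        b.repr ⁅X i, X j⁆ (Fin.succ k) * metricMatrix α β γ μ ν k 0 := keyπ _ 0
    rw [e, hXX i j]
    simp [Matrix.mul_apply, Fin.sum_univ_five, fs0', fs1', fs2', fs3', fs4',
      Finsupp.single_apply, metricMatrix, Matrix.vecHead, Matrix.vecTail, hM1def, hPmdef]
    try ring
  have hL2 : ∀ i j : Fin 5, ip (π ⁅X i, X j⁆) (b 2) = (Pm.transpose * M2 * Pm) i j := by
    intro i j
    have e : ip (π ⁅X i, X j⁆) (b 2) = ∑ k : Fin 5,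
        b.repr ⁅X i, X j⁆ (Fin.succ k) * metricMatrix α β γ μ ν k 1 := keyπ _ 1
    rw [e, hXX i j]
    simp [Matrix.mul_apply, Fin.sum_univ_five, fs0', fs1', fs2', fs3', fs4',
      Finsupp.single_apply, metricMatrix, Matrix.vecHead, Matrix.vecTail, hM2def, hPmdef]
    try ring
  have hL3 : ∀ i j : Fin 5, ip (π ⁅X i, X j⁆) (b 3) = (Pm.transpose * M3 * Pm) i j := by
    intro i j
    have e : ip (π ⁅X i, X j⁆) (b 3) = ∑ k : Fin 5,
        b.repr ⁅X i, X j⁆ (Fin.succ k) * metricMatrix α β γ μ ν k 2 := keyπ _ 2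
    rw [e, hXX i j]
    simp [Matrix.mul_apply, Fin.sum_univ_five, fs0', fs1', fs2', fs3', fs4',
      Finsupp.single_apply, metricMatrix, Matrix.vecHead, Matrix.vecTail, hM3def, hPmdef]
    try ring
  have hL4 : ∀ i j : Fin 5, ip (π ⁅X i, X j⁆) (b 4) = (Pm.transpose * M4 * Pm) i j := by
    intro i j
    have e : ip (π ⁅X i, X j⁆) (b 4) = ∑ k : Fin 5,
        b.repr ⁅X i, X j⁆ (Fin.succ k) * metricMatrix α β γ μ ν k 3 := keyπ _ 3
    rw [e, hXX i j]
    simp [Matrix.mul_apply, Fin.sum_univ_five, fs0', fs1', fs2', fs3', fs4',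
      Finsupp.single_apply, metricMatrix, Matrix.vecHead, Matrix.vecTail, hM4def, hPmdef]
    try ring
  have hL5 : ∀ i j : Fin 5, ip (π ⁅X i, X j⁆) (b 5) = (Pm.transpose * M5 * Pm) i j := by
    intro i j
    have e : ip (π ⁅X i, X j⁆) (b 5) = ∑ k : Fin 5,
        b.repr ⁅X i, X j⁆ (Fin.succ k) * metricMatrix α β γ μ ν k 4 := keyπ _ 4
    rw [e, hXX i j]
    simp [Matrix.mul_apply, Fin.sum_univ_five, fs0', fs1', fs2', fs3', fs4',
      Finsupp.single_apply, metricMatrix, Matrix.vecHead, Matrix.vecTail, hM5def, hPmdef]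
    try ring
  have htrace : ∀ A B : Matrix (Fin 5) (Fin 5) ℝ,
      ∑ i : Fin 5, ∑ j : Fin 5, A i j * B i j = Matrix.trace (A * B.transpose) := by
    intro A B
    simp [Matrix.trace, Matrix.diag, Matrix.mul_apply, Matrix.transpose_apply]
  have hS2gen : ∀ Mm Mn : Matrix (Fin 5) (Fin 5) ℝ,
      (∑ i : Fin 5, ∑ j : Fin 5, ((Pm.transpose * Mm * Pm) i j) * ((Pm.transpose * Mn * Pm) i j))
        = Matrix.trace (Mm * Qg * Mn.transpose * Qg) := by
    intro Mm Mn
    rw [htrace]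
    have e2 : Pm * (Pm.transpose * (Mn.transpose * Pm)) = Qg * (Mn.transpose * Pm) := by
      rw [← Matrix.mul_assoc, hQmat]
    have e1 : (Pm.transpose * Mm * Pm) * (Pm.transpose * Mn * Pm).transpose
        = Pm.transpose * (Mm * (Qg * (Mn.transpose * Pm))) := by
      simp only [Matrix.transpose_mul, Matrix.transpose_transpose, Matrix.mul_assoc, e2]
    rw [e1]
    calc Matrix.trace (Pm.transpose * (Mm * (Qg * (Mn.transpose * Pm))))
        = Matrix.trace ((Mm * (Qg * (Mn.transpose * Pm))) * Pm.transpose) := Matrix.trace_mul_comm _ _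
      _ = Matrix.trace (Mm * Qg * Mn.transpose * Qg) := by
          rw [← hQmat]; simp only [Matrix.mul_assoc]
  have hS2_11 : (∑ i : Fin 5, ∑ j : Fin 5, ip (π ⁅X i, X j⁆) (b 1) * ip (π ⁅X i, X j⁆) (b 1))
      = 4*α^2/(β*γ-(μ^2+ν^2)) + 8*α^2*ν^2/(β*γ-(μ^2+ν^2))^2 := by
    have e : (∑ i : Fin 5, ∑ j : Fin 5, ip (π ⁅X i, X j⁆) (b 1) * ip (π ⁅X i, X j⁆) (b 1))
        = ∑ i : Fin 5, ∑ j : Fin 5, ((Pm.transpose * M1 * Pm) i j) * ((Pm.transpose * M1 * Pm) i j) :=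
      Finset.sum_congr rfl fun i _ => Finset.sum_congr rfl fun j _ => by rw [hL1]
    rw [e, hS2gen]
    simp [hM1def, hM1def, hQgdef, Matrix.trace, Matrix.diag, Matrix.mul_apply,
      Matrix.transpose_apply, Fin.sum_univ_five, Matrix.vecHead, Matrix.vecTail, Matrix.vecMul, dotProduct]
    field_simp
    ring
  have hS2_22 : (∑ i : Fin 5, ∑ j : Fin 5, ip (π ⁅X i, X j⁆) (b 2) * ip (π ⁅X i, X j⁆) (b 2))
      = 2*β^3/(α*(β*γ-(μ^2+ν^2))) := by
    have e : (∑ i : Fin 5, ∑ j : Fin 5, ip (π ⁅X i, X j⁆) (b 2) * ip (π ⁅X i, X j⁆) (b 2))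
        = ∑ i : Fin 5, ∑ j : Fin 5, ((Pm.transpose * M2 * Pm) i j) * ((Pm.transpose * M2 * Pm) i j) :=
      Finset.sum_congr rfl fun i _ => Finset.sum_congr rfl fun j _ => by rw [hL2]
    rw [e, hS2gen]
    simp [hM2def, hM2def, hQgdef, Matrix.trace, Matrix.diag, Matrix.mul_apply,
      Matrix.transpose_apply, Fin.sum_univ_five, Matrix.vecHead, Matrix.vecTail, Matrix.vecMul, dotProduct]
    field_simp
    ring
  have hS2_33 : (∑ i : Fin 5, ∑ j : Fin 5, ip (π ⁅X i, X j⁆) (b 3) * ip (π ⁅X i, X j⁆) (b 3))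
      = 2*β^3/(α*(β*γ-(μ^2+ν^2))) := by
    have e : (∑ i : Fin 5, ∑ j : Fin 5, ip (π ⁅X i, X j⁆) (b 3) * ip (π ⁅X i, X j⁆) (b 3))
        = ∑ i : Fin 5, ∑ j : Fin 5, ((Pm.transpose * M3 * Pm) i j) * ((Pm.transpose * M3 * Pm) i j) :=
      Finset.sum_congr rfl fun i _ => Finset.sum_congr rfl fun j _ => by rw [hL3]
    rw [e, hS2gen]
    simp [hM3def, hM3def, hQgdef, Matrix.trace, Matrix.diag, Matrix.mul_apply,
      Matrix.transpose_apply, Fin.sum_univ_five, Matrix.vecHead, Matrix.vecTail, Matrix.vecMul, dotProduct]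
    field_simp
    ring
  have hS2_44 : (∑ i : Fin 5, ∑ j : Fin 5, ip (π ⁅X i, X j⁆) (b 4) * ip (π ⁅X i, X j⁆) (b 4))
      = 2*β*(μ^2+ν^2)/(α*(β*γ-(μ^2+ν^2))) := by
    have e : (∑ i : Fin 5, ∑ j : Fin 5, ip (π ⁅X i, X j⁆) (b 4) * ip (π ⁅X i, X j⁆) (b 4))
        = ∑ i : Fin 5, ∑ j : Fin 5, ((Pm.transpose * M4 * Pm) i j) * ((Pm.transpose * M4 * Pm) i j) :=
      Finset.sum_congr rfl fun i _ => Finset.sum_congr rfl fun j _ => by rw [hL4]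
    rw [e, hS2gen]
    simp [hM4def, hM4def, hQgdef, Matrix.trace, Matrix.diag, Matrix.mul_apply,
      Matrix.transpose_apply, Fin.sum_univ_five, Matrix.vecHead, Matrix.vecTail, Matrix.vecMul, dotProduct]
    field_simp
    ring
  have hS2_55 : (∑ i : Fin 5, ∑ j : Fin 5, ip (π ⁅X i, X j⁆) (b 5) * ip (π ⁅X i, X j⁆) (b 5))
      = 2*β*(μ^2+ν^2)/(α*(β*γ-(μ^2+ν^2))) := by
    have e : (∑ i : Fin 5, ∑ j : Fin 5, ip (π ⁅X i, X j⁆) (b 5) * ip (π ⁅X i, X j⁆) (b 5))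
        = ∑ i : Fin 5, ∑ j : Fin 5, ((Pm.transpose * M5 * Pm) i j) * ((Pm.transpose * M5 * Pm) i j) :=
      Finset.sum_congr rfl fun i _ => Finset.sum_congr rfl fun j _ => by rw [hL5]
    rw [e, hS2gen]
    simp [hM5def, hM5def, hQgdef, Matrix.trace, Matrix.diag, Matrix.mul_apply,
      Matrix.transpose_apply, Fin.sum_univ_five, Matrix.vecHead, Matrix.vecTail, Matrix.vecMul, dotProduct]
    field_simp
    ring
  have hS2_24 : (∑ i : Fin 5, ∑ j : Fin 5, ip (π ⁅X i, X j⁆) (b 2) * ip (π ⁅X i, X j⁆) (b 4))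
      = 2*β^2*μ/(α*(β*γ-(μ^2+ν^2))) := by
    have e : (∑ i : Fin 5, ∑ j : Fin 5, ip (π ⁅X i, X j⁆) (b 2) * ip (π ⁅X i, X j⁆) (b 4))
        = ∑ i : Fin 5, ∑ j : Fin 5, ((Pm.transpose * M2 * Pm) i j) * ((Pm.transpose * M4 * Pm) i j) :=
      Finset.sum_congr rfl fun i _ => Finset.sum_congr rfl fun j _ => by rw [hL2, hL4]
    rw [e, hS2gen]
    simp [hM2def, hM4def, hQgdef, Matrix.trace, Matrix.diag, Matrix.mul_apply,
      Matrix.transpose_apply, Fin.sum_univ_five, Matrix.vecHead, Matrix.vecTail, Matrix.vecMul, dotProduct]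
    field_simp
    ring
  have hS2_35 : (∑ i : Fin 5, ∑ j : Fin 5, ip (π ⁅X i, X j⁆) (b 3) * ip (π ⁅X i, X j⁆) (b 5))
      = 2*β^2*μ/(α*(β*γ-(μ^2+ν^2))) := by
    have e : (∑ i : Fin 5, ∑ j : Fin 5, ip (π ⁅X i, X j⁆) (b 3) * ip (π ⁅X i, X j⁆) (b 5))
        = ∑ i : Fin 5, ∑ j : Fin 5, ((Pm.transpose * M3 * Pm) i j) * ((Pm.transpose * M5 * Pm) i j) :=
      Finset.sum_congr rfl fun i _ => Finset.sum_congr rfl fun j _ => by rw [hL3, hL5]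
    rw [e, hS2gen]
    simp [hM3def, hM5def, hQgdef, Matrix.trace, Matrix.diag, Matrix.mul_apply,
      Matrix.transpose_apply, Fin.sum_univ_five, Matrix.vecHead, Matrix.vecTail, Matrix.vecMul, dotProduct]
    field_simp
    ring
  have hS2_25 : (∑ i : Fin 5, ∑ j : Fin 5, ip (π ⁅X i, X j⁆) (b 2) * ip (π ⁅X i, X j⁆) (b 5))
      = 2*β^2*ν/(α*(β*γ-(μ^2+ν^2))) := by
    have e : (∑ i : Fin 5, ∑ j : Fin 5, ip (π ⁅X i, X j⁆) (b 2) * ip (π ⁅X i, X j⁆) (b 5))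
        = ∑ i : Fin 5, ∑ j : Fin 5, ((Pm.transpose * M2 * Pm) i j) * ((Pm.transpose * M5 * Pm) i j) :=
      Finset.sum_congr rfl fun i _ => Finset.sum_congr rfl fun j _ => by rw [hL2, hL5]
    rw [e, hS2gen]
    simp [hM2def, hM5def, hQgdef, Matrix.trace, Matrix.diag, Matrix.mul_apply,
      Matrix.transpose_apply, Fin.sum_univ_five, Matrix.vecHead, Matrix.vecTail, Matrix.vecMul, dotProduct]
    field_simp
    ring
  have hS2_34 : (∑ i : Fin 5, ∑ j : Fin 5, ip (π ⁅X i, X j⁆) (b 3) * ip (π ⁅X i, X j⁆) (b 4))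
      = -(2*β^2*ν/(α*(β*γ-(μ^2+ν^2)))) := by
    have e : (∑ i : Fin 5, ∑ j : Fin 5, ip (π ⁅X i, X j⁆) (b 3) * ip (π ⁅X i, X j⁆) (b 4))
        = ∑ i : Fin 5, ∑ j : Fin 5, ((Pm.transpose * M3 * Pm) i j) * ((Pm.transpose * M4 * Pm) i j) :=
      Finset.sum_congr rfl fun i _ => Finset.sum_congr rfl fun j _ => by rw [hL3, hL4]
    rw [e, hS2gen]
    simp [hM3def, hM4def, hQgdef, Matrix.trace, Matrix.diag, Matrix.mul_apply,
      Matrix.transpose_apply, Fin.sum_univ_five, Matrix.vecHead, Matrix.vecTail, Matrix.vecMul, dotProduct]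
    field_simp
    ring
  have htr' : ∀ (f : Module.End ℝ L), LinearMap.trace ℝ L f = ∑ k : Fin 6, b.repr (f (b k)) k := by
    intro f
    rw [LinearMap.trace_eq_matrix_trace ℝ b f]
    simp [Matrix.trace, Matrix.diag, LinearMap.toMatrix_apply]
  have hkill : ∀ m n : Fin 6, killingForm ℝ L (b m) (b n)
      = ∑ k : Fin 6, b.repr ⁅b m, ⁅b n, b k⁆⁆ k := by
    intro m n
    rw [killingForm_apply_apply, htr']
    simp [LieAlgebra.ad_apply]
  have hB11 : killingForm ℝ L (b 1) (b 1) = 0 := by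
    rw [hkill, Fin.sum_univ_six]
    simp [t00, t01, t02, t03, t04, t05, t10, t11, t12, t13, t14, t15, t20, t21, t22, t23, t24, t25, t30, t31, t32, t33, t34, t35, t40, t41, t42, t43, t44, t45, t50, t51, t52, t53, t54, t55, Finsupp.single_apply]
    try norm_num
  have hB22 : killingForm ℝ L (b 2) (b 2) = 0 := by
    rw [hkill, Fin.sum_univ_six]
    simp [t00, t01, t02, t03, t04, t05, t10, t11, t12, t13, t14, t15, t20, t21, t22, t23, t24, t25, t30, t31, t32, t33, t34, t35, t40, t41, t42, t43, t44, t45, t50, t51, t52, t53, t54, t55, Finsupp.single_apply]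
    try norm_num
  have hB33 : killingForm ℝ L (b 3) (b 3) = 0 := by
    rw [hkill, Fin.sum_univ_six]
    simp [t00, t01, t02, t03, t04, t05, t10, t11, t12, t13, t14, t15, t20, t21, t22, t23, t24, t25, t30, t31, t32, t33, t34, t35, t40, t41, t42, t43, t44, t45, t50, t51, t52, t53, t54, t55, Finsupp.single_apply]
    try norm_num
  have hB44 : killingForm ℝ L (b 4) (b 4) = -4 := by
    rw [hkill, Fin.sum_univ_six]
    simp [t00, t01, t02, t03, t04, t05, t10, t11, t12, t13, t14, t15, t20, t21, t22, t23, t24, t25, t30, t31, t32, t33, t34, t35, t40, t41, t42, t43, t44, t45, t50, t51, t52, t53, t54, t55, Finsupp.single_apply]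
    try norm_num
  have hB55 : killingForm ℝ L (b 5) (b 5) = -4 := by
    rw [hkill, Fin.sum_univ_six]
    simp [t00, t01, t02, t03, t04, t05, t10, t11, t12, t13, t14, t15, t20, t21, t22, t23, t24, t25, t30, t31, t32, t33, t34, t35, t40, t41, t42, t43, t44, t45, t50, t51, t52, t53, t54, t55, Finsupp.single_apply]
    try norm_num
  have hB24 : killingForm ℝ L (b 2) (b 4) = 0 := by
    rw [hkill, Fin.sum_univ_six]
    simp [t00, t01, t02, t03, t04, t05, t10, t11, t12, t13, t14, t15, t20, t21, t22, t23, t24, t25, t30, t31, t32, t33, t34, t35, t40, t41, t42, t43, t44, t45, t50, t51, t52, t53, t54, t55, Finsupp.single_apply]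
    try norm_num
  have hB35 : killingForm ℝ L (b 3) (b 5) = 0 := by
    rw [hkill, Fin.sum_univ_six]
    simp [t00, t01, t02, t03, t04, t05, t10, t11, t12, t13, t14, t15, t20, t21, t22, t23, t24, t25, t30, t31, t32, t33, t34, t35, t40, t41, t42, t43, t44, t45, t50, t51, t52, t53, t54, t55, Finsupp.single_apply]
    try norm_num
  have hB25 : killingForm ℝ L (b 2) (b 5) = 0 := by
    rw [hkill, Fin.sum_univ_six]
    simp [t00, t01, t02, t03, t04, t05, t10, t11, t12, t13, t14, t15, t20, t21, t22, t23, t24, t25, t30, t31, t32, t33, t34, t35, t40, t41, t42, t43, t44, t45, t50, t51, t52, t53, t54, t55, Finsupp.single_apply]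
    try norm_num
  have hB34 : killingForm ℝ L (b 3) (b 4) = 0 := by
    rw [hkill, Fin.sum_univ_six]
    simp [t00, t01, t02, t03, t04, t05, t10, t11, t12, t13, t14, t15, t20, t21, t22, t23, t24, t25, t30, t31, t32, t33, t34, t35, t40, t41, t42, t43, t44, t45, t50, t51, t52, t53, t54, t55, Finsupp.single_apply]
    try norm_num
  refine ⟨?_, ?_, ?_, ?_, ?_, ?_, ?_, ?_, ?_⟩ <;> simp only [hRic]
  · rw [hB11, hS1_11, hS2_11]
    field_simp
    ring
  · rw [hB22, hS1_22, hS2_22]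
    field_simp
    ring
  · rw [hB33, hS1_33, hS2_33]
    field_simp
    ring
  · rw [hB44, hS1_44, hS2_44]
    obtain ⟨D, hD⟩ : ∃ D, β*γ-(μ^2+ν^2) = D := ⟨_, rfl⟩
    have hb : β * γ = D + (μ^2+ν^2) := by linarith
    rw [hD] at hd ⊢
    field_simp
    linear_combination (-4 * β) * hb
  · rw [hB55, hS1_55, hS2_55]
    obtain ⟨D, hD⟩ : ∃ D, β*γ-(μ^2+ν^2) = D := ⟨_, rfl⟩
    have hb : β * γ = D + (μ^2+ν^2) := by linarith
    rw [hD] at hd ⊢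
    field_simp
    linear_combination (-4 * β) * hb
  · rw [hB24, hS1_24, hS2_24]
    field_simp
    ring
  · rw [hB35, hS1_35, hS2_35]
    field_simp
    ring
  · rw [hB25, hS1_25, hS2_25]
    field_simp
    ring
  · rw [hB34, hS1_34, hS2_34]
    field_simp
    ring
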